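/- arXiv:2312.17153 — 2 statements merged into one kernel-verified Lean document; each statement's English description precedes it below -/
import Mathlib

section
/- For m ≥ 1 and n ≥ 1, the alternative m-th order Eulerian fraction F̂_{m;n}(t) = t·S_{m;n}(t)/(1-t)^{mn+1} satisfies t · d/dt F̂_{m;n}(t) = (1-t)^{m-1} · F̂_{m;n+1}(t) for t ≠ 1. -/
/-- The `m`th-order Eulerian numbers `T^(m)_{n,k}`, with integer descent index `k`
(so `T^(m)_{n,k} = 0` for `k < 0` or `k ≥ n`). -/
def eulerianT (m : ℕ) : ℕ → ℤ → ℤ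
  | 0, _ => 0
  | 1, k => if k = 0 then 1 else 0
  | n + 2, k =>
      if k < 0 ∨ (n : ℤ) + 2 ≤ k then 0
      else (k + 1) * eulerianT m (n + 1) k +
        ((m : ℤ) * ((n : ℤ) + 2) - k - (m : ℤ) + 1) * eulerianT m (n + 1) (k - 1)

/-- The `m`th-order Eulerian polynomial `S_{m;n}(t)`. -/
noncomputable def S (m n : ℕ) (t : ℝ) : ℝ :=
  ∑ k ∈ Finset.range n, (eulerianT m n (k : ℤ) : ℝ) * t ^ k

/-- The alternative form of the `m`th-order Eulerian fraction. -/
noncomputable def Fhat (m n : ℕ) (t : ℝ) : ℝ := t * S m n t / (1 - t) ^ (m * n + 1)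

lemma eulerianT_neg (m n : ℕ) (k : ℤ) (hk : k < 0) : eulerianT m n k = 0 := by
  match n with
  | 0 => rfl
  | 1 => simp [eulerianT]; omega
  | n + 2 => simp only [eulerianT]; rw [if_pos (Or.inl hk)]

lemma eulerianT_ge (m n : ℕ) (k : ℤ) (hk : (n : ℤ) ≤ k) : eulerianT m n k = 0 := by
  match n with
  | 0 => rfl
  | 1 => simp [eulerianT]; omega
  | n + 2 => simp only [eulerianT]; rw [if_pos (Or.inr (by push_cast at hk ⊢; omega))]

lemma eulerianT_rec (m n : ℕ) (hn : 1 ≤ n) (k : ℕ) (hk : k ≤ n) :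
    eulerianT m (n + 1) (k : ℤ) =
      ((k : ℤ) + 1) * eulerianT m n k + ((m : ℤ) * n + 1 - k) * eulerianT m n ((k : ℤ) - 1) := by
  obtain ⟨n', rfl⟩ : ∃ n', n = n' + 1 := ⟨n - 1, by omega⟩
  show eulerianT m (n' + 2) k = _
  simp only [eulerianT]
  rw [if_neg (by omega)]
  have : (m : ℤ) * ((n' : ℤ) + 2) - k - m + 1 = (m : ℤ) * ((n' : ℤ) + 1) + 1 - k := by ring
  rw [this]
  push_cast
  ring

lemma key (m n : ℕ) (hn : 1 ≤ n) (t : ℝ) :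
    S m (n + 1) t =
      (S m n t + ∑ k ∈ Finset.range n, (eulerianT m n (k : ℤ) : ℝ) * k * t ^ k) * (1 - t)
        + ((m : ℝ) * n + 1) * t * S m n t := by
  have h1 : S m (n + 1) t
      = ∑ k ∈ Finset.range (n + 1),
        ((((k : ℤ) + 1) * eulerianT m n k : ℤ) : ℝ) * t ^ k
      + ∑ k ∈ Finset.range (n + 1),
        ((((m : ℤ) * n + 1 - k) * eulerianT m n ((k : ℤ) - 1) : ℤ) : ℝ) * t ^ k := by
    rw [S, ← Finset.sum_add_distrib]
    refine Finset.sum_congr rfl fun k hk => ?_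
    rw [eulerianT_rec m n hn k (by simpa using Nat.lt_succ_iff.mp (Finset.mem_range.mp hk))]
    push_cast
    ring
  have h2 : ∑ k ∈ Finset.range (n + 1),
      ((((k : ℤ) + 1) * eulerianT m n k : ℤ) : ℝ) * t ^ k
      = ∑ k ∈ Finset.range n, ((((k : ℤ) + 1) * eulerianT m n k : ℤ) : ℝ) * t ^ k := by
    rw [Finset.sum_range_succ, eulerianT_ge m n n le_rfl]
    simp
  have h3 : ∑ k ∈ Finset.range (n + 1),
      ((((m : ℤ) * n + 1 - k) * eulerianT m n ((k : ℤ) - 1) : ℤ) : ℝ) * t ^ k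
      = ∑ k ∈ Finset.range n,
        ((((m : ℤ) * n - k) * eulerianT m n k : ℤ) : ℝ) * t ^ (k + 1) := by
    rw [Finset.sum_range_succ']
    rw [show (((0:ℕ) : ℤ)) - 1 = -1 by norm_num, eulerianT_neg m n (-1) (by norm_num)]
    simp only [mul_zero, zero_mul, Int.cast_zero, pow_zero, mul_one, add_zero]
    refine Finset.sum_congr rfl fun k hk => ?_
    have : (((k+1:ℕ)) : ℤ) - 1 = (k : ℤ) := by push_cast; ring
    rw [this]
    push_cast
    ring
  rw [h1, h2, h3, S]
  simp only [add_mul, Finset.sum_mul, Finset.mul_sum, ← Finset.sum_add_distrib]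
  refine Finset.sum_congr rfl fun k hk => ?_
  push_cast
  ring

lemma hasDerivAt_S (m n : ℕ) (t : ℝ) :
    HasDerivAt (S m n)
      (∑ k ∈ Finset.range n, (eulerianT m n (k : ℤ) : ℝ) * ((k : ℝ) * t ^ (k - 1))) t := by
  have : S m n = fun t : ℝ => ∑ k ∈ Finset.range n, (eulerianT m n (k : ℤ) : ℝ) * t ^ k := rfl
  rw [this]
  exact HasDerivAt.fun_sum fun k _ => (hasDerivAt_pow k t).const_mul _

lemma t_mul_deriv (m n : ℕ) (t : ℝ) :
    t * (∑ k ∈ Finset.range n, (eulerianT m n (k : ℤ) : ℝ) * ((k : ℝ) * t ^ (k - 1)))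
      = ∑ k ∈ Finset.range n, (eulerianT m n (k : ℤ) : ℝ) * k * t ^ k := by
  rw [Finset.mul_sum]
  refine Finset.sum_congr rfl fun k _ => ?_
  cases k with
  | zero => simp
  | succ k => simp only [Nat.add_sub_cancel]; push_cast; ring

theorem deriv_Fhat (m n : ℕ) (hm : 1 ≤ m) (hn : 1 ≤ n) (t : ℝ) (ht : t ≠ 1) :
    t * deriv (Fhat m n) t = (1 - t) ^ (m - 1) * Fhat m (n + 1) t := by
  obtain ⟨m', rfl⟩ : ∃ m', m = m' + 1 := ⟨m - 1, by omega⟩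
  set m := m' + 1 with hmdef
  have h1t : (1 : ℝ) - t ≠ 0 := sub_ne_zero_of_ne (Ne.symm ht)
  set D : ℝ := ∑ k ∈ Finset.range n, (eulerianT m n (k : ℤ) : ℝ) * ((k : ℝ) * t ^ (k - 1)) with hD
  have hnum : HasDerivAt (fun t : ℝ => t * S m n t) (1 * S m n t + t * D) t :=
    (hasDerivAt_id t).mul (hasDerivAt_S m n t)
  have hden : HasDerivAt (fun t : ℝ => (1 - t) ^ (m * n + 1))
      ((↑(m * n + 1) * (1 - t) ^ (m * n + 1 - 1)) * (0 - 1)) t :=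
    ((hasDerivAt_const t (1:ℝ)).sub (hasDerivAt_id t)).pow _
  have hF : HasDerivAt (Fhat m n)
      (((1 * S m n t + t * D) * (1 - t) ^ (m * n + 1)
        - t * S m n t * ((↑(m * n + 1) * (1 - t) ^ (m * n + 1 - 1)) * (0 - 1)))
        / ((1 - t) ^ (m * n + 1)) ^ 2) t := by
    have : Fhat m n = fun t : ℝ => (t * S m n t) / ((1 - t) ^ (m * n + 1)) := rfl
    rw [this]
    exact hnum.div hden (pow_ne_zero _ h1t)
  rw [hF.deriv]
  have hkey := key m n hn t
  have htd : t * D = ∑ k ∈ Finset.range n, (eulerianT m n (k : ℤ) : ℝ) * k * t ^ k :=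
    t_mul_deriv m n t
  rw [Fhat, hkey, ← htd]
  have hpow1 : m * n + 1 - 1 = m * n := by omega
  have hpow2 : m * (n + 1) + 1 = m * n + 1 + m := by ring
  have hpow3 : (m : ℕ) - 1 = m' := by omega
  rw [hpow1, hpow2, hpow3, hmdef]
  field_simp
  push_cast
  ring_nf
end

section
/- For k ≥ 1 and k+1 ≤ i ≤ 2k, the second-order Eulerian numbers satisfy T^(2)_{k, 2k-i} = Σ_{n=0}^{i} (-1)^{i-n} · c(n, n-k) · C(2k+1, i-n), where c(n, j) is the unsigned Stirling number of the first kind. -/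
def stirlingFirst : ℕ → ℤ → ℕ
  | 0, j => if j = 0 then 1 else 0
  | n + 1, j => n * stirlingFirst n j + stirlingFirst n (j - 1)

lemma stirling_neg : ∀ (n : ℕ) (j : ℤ), j < 0 → stirlingFirst n j = 0 := by
  intro n
  induction n with
  | zero => intro j hj; simp [stirlingFirst]; omega
  | succ n ih => intro j hj; simp [stirlingFirst, ih j hj, ih (j-1) (by omega)]

lemma stirling_zero : ∀ n : ℕ, stirlingFirst (n+1) 0 = 0 := by
  intro n
  induction n with
  | zero => simp [stirlingFirst, stirling_neg 0 (-1) (by norm_num)]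
  | succ n ih =>
      rw [stirlingFirst]
      simp [ih, stirling_neg (n+1) (-1) (by norm_num), show (0:ℤ)-1 = -1 by ring]

lemma stirling_gt : ∀ (n : ℕ) (j : ℤ), (n : ℤ) < j → stirlingFirst n j = 0 := by
  intro n
  induction n with
  | zero => intro j hj; simp [stirlingFirst]; omega
  | succ n ih => intro j hj
                 simp [stirlingFirst, ih j (by push_cast at hj ⊢; omega),
                   ih (j-1) (by push_cast at hj ⊢; omega)]

lemma stirling_diag : ∀ n : ℕ, stirlingFirst n ((n : ℤ)) = 1 := by
  intro n
  induction n with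
  | zero => simp [stirlingFirst]
  | succ n ih =>
      have h := stirling_gt n ((n:ℤ)+1) (by omega)
      rw [stirlingFirst]
      push_cast
      rw [show (n:ℤ) + 1 - 1 = (n:ℤ) by ring]
      simp [h, ih]

lemma E_neg (k : ℕ) (j : ℤ) (hj : j < 0) : eulerianT 2 k j = 0 := by
  match k with
  | 0 => rfl
  | 1 => rw [eulerianT]; rw [if_neg (by omega)]
  | n+2 => rw [eulerianT]; rw [if_pos (Or.inl hj)]

lemma E_ge (k : ℕ) (j : ℤ) (hj : (k : ℤ) ≤ j) : eulerianT 2 k j = 0 := by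
  match k with
  | 0 => rfl
  | 1 => rw [eulerianT]; rw [if_neg (by omega)]
  | n+2 => rw [eulerianT]; rw [if_pos (Or.inr (by push_cast at hj ⊢; omega))]

lemma E_rec (k : ℕ) (hk : 1 ≤ k) (j : ℤ) :
    eulerianT 2 (k+1) j =
      (j+1) * eulerianT 2 k j + (2*(k:ℤ)+1-j) * eulerianT 2 k (j-1) := by
  obtain ⟨n, rfl⟩ : ∃ n, k = n + 1 := ⟨k-1, by omega⟩
  rw [show n+1+1 = n+2 from rfl, eulerianT]
  by_cases h : j < 0 ∨ (n : ℤ) + 2 ≤ j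
  · rw [if_pos h]
    rcases h with h | h
    · rw [E_neg (n+1) j h, E_neg (n+1) (j-1) (by omega)]; ring
    · rw [E_ge (n+1) j (by push_cast; omega), E_ge (n+1) (j-1) (by push_cast; omega)]; ring
  · rw [if_neg h]
    push_cast
    ring

def U (k t i : ℕ) : ℤ :=
  ∑ n ∈ Finset.range (i + 1),
    (-1 : ℤ) ^ (i - n) * (stirlingFirst n ((n : ℤ) - k) : ℤ) * (t.choose (i - n) : ℤ)

def V (k t i : ℕ) : ℤ :=
  ∑ n ∈ Finset.range (i + 1),
    (-1 : ℤ) ^ (i - n) * (n : ℤ) * (stirlingFirst n ((n : ℤ) - k) : ℤ) * (t.choose (i - n) : ℤ)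

-- Pascal
lemma lemA (k t i : ℕ) : U k (t+1) (i+1) = U k t (i+1) - U k t i := by
  unfold U
  rw [Finset.sum_range_succ, Finset.sum_range_succ (f := fun n =>
    (-1 : ℤ) ^ (i+1 - n) * (stirlingFirst n ((n : ℤ) - k) : ℤ) * (t.choose (i+1 - n) : ℤ))]
  have key : ∀ n ∈ Finset.range (i+1),
      (-1 : ℤ) ^ (i+1 - n) * (stirlingFirst n ((n : ℤ) - k) : ℤ) * ((t+1).choose (i+1 - n) : ℤ)
      = (-1 : ℤ) ^ (i+1 - n) * (stirlingFirst n ((n : ℤ) - k) : ℤ) * (t.choose (i+1 - n) : ℤ)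
        - (-1 : ℤ) ^ (i - n) * (stirlingFirst n ((n : ℤ) - k) : ℤ) * (t.choose (i - n) : ℤ) := by
    intro n hn
    rw [Finset.mem_range] at hn
    have hs : i + 1 - n = (i - n) + 1 := by omega
    rw [hs, Nat.choose_succ_succ, pow_succ]
    push_cast
    ring
  rw [Finset.sum_congr rfl key, Finset.sum_sub_distrib]
  simp
  ring

lemma lemB (k t i : ℕ) : U (k+1) t (i+1) = U (k+1) t i + V k t i := by
  unfold U V
  rw [Finset.sum_range_succ']
  have h0 : (-1 : ℤ) ^ (i+1 - 0) * (stirlingFirst 0 ((0 : ℕ) - (k+1 : ℕ) : ℤ) : ℤ)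
      * (t.choose (i+1 - 0) : ℤ) = 0 := by
    rw [stirlingFirst]
    rw [if_neg (by push_cast; omega)]
    simp
  rw [h0, add_zero]
  have key : ∀ n ∈ Finset.range (i+1),
      (-1 : ℤ) ^ (i+1 - (n+1)) * (stirlingFirst (n+1) (((n+1 : ℕ) : ℤ) - ((k+1 : ℕ) : ℤ)) : ℤ)
        * (t.choose (i+1 - (n+1)) : ℤ)
      = (-1 : ℤ) ^ (i - n) * (stirlingFirst n ((n : ℤ) - (k+1 : ℕ)) : ℤ) * (t.choose (i - n) : ℤ)
        + (-1 : ℤ) ^ (i - n) * (n : ℤ) * (stirlingFirst n ((n : ℤ) - k) : ℤ)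
          * (t.choose (i - n) : ℤ) := by
    intro n hn
    have hs : i + 1 - (n+1) = i - n := by omega
    rw [hs, stirlingFirst]
    rw [show ((n+1 : ℕ) : ℤ) - ((k+1 : ℕ) : ℤ) = (n : ℤ) - k by push_cast; ring]
    rw [show (n : ℤ) - k - 1 = (n : ℤ) - ((k+1 : ℕ) : ℤ) by push_cast; ring]
    push_cast
    ring
  rw [Finset.sum_congr rfl key, Finset.sum_add_distrib]

lemma lemC (k t i : ℕ) :
    V k (t+1) (i+1) = (i+1 : ℤ) * U k (t+1) (i+1) + (t+1 : ℤ) * U k t i := by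
  have key : ∀ n ∈ Finset.range (i+2),
      (-1 : ℤ) ^ (i+1 - n) * (n : ℤ) * (stirlingFirst n ((n : ℤ) - k) : ℤ)
          * ((t+1).choose (i+1 - n) : ℤ)
      = (i+1 : ℤ) * ((-1 : ℤ) ^ (i+1 - n) * (stirlingFirst n ((n : ℤ) - k) : ℤ)
          * ((t+1).choose (i+1 - n) : ℤ))
        + (-1 : ℤ) ^ (i+1 - n) * ((n : ℤ) - (i+1)) * (stirlingFirst n ((n : ℤ) - k) : ℤ)
          * ((t+1).choose (i+1 - n) : ℤ) := by
    intro n _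
    ring
  unfold V U
  rw [Finset.sum_congr rfl key, Finset.sum_add_distrib, ← Finset.mul_sum]
  congr 1
  rw [Finset.sum_range_succ]
  rw [show ((i+1 : ℕ) : ℤ) - (i+1 : ℤ) = 0 by push_cast; ring]
  rw [mul_zero, zero_mul, zero_mul, add_zero]
  rw [Finset.mul_sum]
  apply Finset.sum_congr rfl
  intro n hn
  rw [Finset.mem_range] at hn
  have hs : i + 1 - n = (i - n) + 1 := by omega
  have hmul : ((t+1).choose ((i-n)+1) : ℤ) * ((i - n : ℕ) + 1 : ℤ) = (t+1 : ℤ) * (t.choose (i-n) : ℤ) := by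
    exact_mod_cast congrArg (Nat.cast : ℕ → ℤ) (Nat.add_one_mul_choose_eq t (i - n)).symm
  have hn' : (n : ℤ) - (i+1) = -(((i - n : ℕ) : ℤ) + 1) := by
    have : (i - n : ℕ) = i - n := rfl
    push_cast [Nat.cast_sub (by omega : n ≤ i)]
    ring
  rw [hs, hn', pow_succ]
  have : ((-1 : ℤ) ^ (i-n) * (-1)) * (-((( i - n : ℕ) : ℤ) + 1)) *
      (stirlingFirst n ((n : ℤ) - k) : ℤ) * ((t+1).choose ((i-n)+1) : ℤ)
      = (-1 : ℤ) ^ (i-n) * (stirlingFirst n ((n : ℤ) - k) : ℤ) *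
        (((t+1).choose ((i-n)+1) : ℤ) * (((i - n : ℕ) : ℤ) + 1)) := by ring
  rw [this, hmul]
  ring

lemma stirling_nonpos (n : ℕ) (j : ℤ) (h1 : 1 ≤ n) (h2 : j ≤ 0) : stirlingFirst n j = 0 := by
  rcases lt_or_eq_of_le h2 with h | h
  · exact stirling_neg n j h
  · subst h
    obtain ⟨m, rfl⟩ : ∃ m, n = m + 1 := ⟨n-1, by omega⟩
    exact stirling_zero m

lemma U_zero_of (k t i : ℕ) (h : i ≤ k) (hk : 1 ≤ k) : U k t i = 0 := by
  apply Finset.sum_eq_zero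
  intro n hn
  rw [Finset.mem_range] at hn
  rcases Nat.eq_zero_or_pos n with h0 | h0
  · subst h0
    rw [stirlingFirst, if_neg (by push_cast; omega)]
    simp
  · rw [stirling_nonpos n _ h0 (by push_cast; omega)]
    simp

lemma U01 (i : ℕ) : U 0 1 (i+1) = 0 := by
  unfold U
  rw [Finset.sum_range_succ, Finset.sum_range_succ]
  have h1 : ∑ n ∈ Finset.range i,
      (-1 : ℤ) ^ (i+1 - n) * (stirlingFirst n ((n : ℤ) - (0:ℕ)) : ℤ)
        * ((1:ℕ).choose (i+1 - n) : ℤ) = 0 := by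
    apply Finset.sum_eq_zero
    intro n hn
    rw [Finset.mem_range] at hn
    rw [Nat.choose_eq_zero_of_lt (show 1 < i+1-n by omega)]
    simp
  rw [h1]
  have d1 : stirlingFirst i ((i : ℤ) - (0:ℕ)) = 1 := by
    rw [show (i:ℤ) - ((0:ℕ):ℤ) = (i:ℤ) by push_cast; ring]; exact stirling_diag i
  have d2 : stirlingFirst (i+1) (((i+1:ℕ) : ℤ) - (0:ℕ)) = 1 := by
    rw [show ((i+1:ℕ):ℤ) - ((0:ℕ):ℤ) = ((i+1:ℕ):ℤ) by push_cast; ring]; exact stirling_diag (i+1)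
  rw [d1, d2]
  norm_num

lemma lemR (k : ℕ) : ∀ i, U (k+1) (2*k+3) (i+2) =
    ((i:ℤ)+1) * U k (2*k+1) (i+1) + (2*(k:ℤ)+1 - i) * U k (2*k+1) i := by
  intro i
  induction i with
  | zero =>
    rcases k with _ | k
    · show U 1 3 2 = 1 * U 0 1 1 + (2*(0:ℤ)+1-0) * U 0 1 0
      rw [show U 0 1 1 = U 0 1 (0+1) from rfl, U01 0]
      unfold U
      simp [Finset.sum_range_succ, stirlingFirst]
    · rw [U_zero_of (k+1+1) _ 2 (by omega) (by omega),
        U_zero_of (k+1) _ 1 (by omega) (by omega),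
        U_zero_of (k+1) _ 0 (by omega) (by omega)]
      ring
  | succ i ih =>
    have hB := lemB k (2*k+3) (i+2)
    have hC := lemC k (2*k+2) (i+1)
    rw [show 2*k+2+1 = 2*k+3 by ring] at hC
    have hA1 := lemA k (2*k+2) (i+1)
    rw [show 2*k+2+1 = 2*k+3 by ring] at hA1
    have hA2 := lemA k (2*k+1) (i+1)
    rw [show 2*k+1+1 = 2*k+2 by ring] at hA2
    have hA3 := lemA k (2*k+1) i
    rw [show 2*k+1+1 = 2*k+2 by ring] at hA3
    rw [show i+1+2 = i+2+1 by ring, hB, hC, hA1, hA2, hA3, ih]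
    push_cast
    ring

lemma main_ind (k : ℕ) : ∀ i : ℕ, k + 1 ≤ i →
    eulerianT 2 k (2*(k:ℤ) - i) = U k (2*k+1) i := by
  induction k with
  | zero =>
    intro i hi
    obtain ⟨m, rfl⟩ : ∃ m, i = m + 1 := ⟨i-1, by omega⟩
    rw [show eulerianT 2 0 (2*((0:ℕ):ℤ) - ((m+1:ℕ):ℤ)) = 0 from rfl,
      show (2*0+1 : ℕ) = 1 from rfl, U01 m]
  | succ k ih =>
    intro i hi
    obtain ⟨m, rfl⟩ : ∃ m, i = m + 2 := ⟨i-2, by omega⟩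
    have hR := lemR k m
    rw [show 2*(k+1)+1 = 2*k+3 by ring, hR]
    rcases Nat.eq_zero_or_pos k with rfl | hk
    · -- k = 0 : use explicit values of eulerianT 2 1
      rw [show (2*(0:ℕ)+1 : ℕ) = 1 from rfl]
      rcases Nat.eq_zero_or_pos m with rfl | hm
      · rw [show U 0 1 1 = U 0 1 (0+1) from rfl, U01 0]
        have : eulerianT 2 1 (2*(((0:ℕ)+1:ℕ):ℤ) - (((0:ℕ)+2:ℕ):ℤ)) = 1 := by
          rw [show (2*(((0:ℕ)+1:ℕ):ℤ) - (((0:ℕ)+2:ℕ):ℤ)) = 0 by norm_num]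
          rw [eulerianT]
          simp
        rw [this]
        unfold U
        simp [stirlingFirst]
      · obtain ⟨p, rfl⟩ : ∃ p, m = p + 1 := ⟨m-1, by omega⟩
        rw [U01 p, U01 (p+1)]
        have : eulerianT 2 1 (2*(((0:ℕ)+1:ℕ):ℤ) - (((p+1+2:ℕ)):ℤ)) = 0 := by
          rw [eulerianT, if_neg (by push_cast; omega)]
        rw [this]
        ring
    · -- k ≥ 1
      have hre := E_rec k hk (2*((k+1:ℕ):ℤ) - ((m+2:ℕ):ℤ))
      rw [hre]
      have e1 : (2*((k+1:ℕ):ℤ) - ((m+2:ℕ):ℤ)) - 1 = 2*(k:ℤ) - ((m+1:ℕ):ℤ) := by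
        push_cast; ring
      rw [e1, ih (m+1) (by omega)]
      rcases Nat.lt_or_ge k m with hkm | hkm
      · -- m ≥ k+1 : use ih at m
        have e2 : (2*((k+1:ℕ):ℤ) - ((m+2:ℕ):ℤ)) = 2*(k:ℤ) - ((m:ℕ):ℤ) := by
          push_cast; ring
        rw [e2, ih m (by omega)]
        push_cast
        ring
      · -- m = k
        have hmk : m = k := by omega
        subst hmk
        rw [show (2*((m+1:ℕ):ℤ) - ((m+2:ℕ):ℤ)) = (m:ℤ) by push_cast; ring]
        rw [E_ge m (m:ℤ) le_rfl, U_zero_of m (2*m+1) m le_rfl (by omega)]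
        push_cast
        ring

theorem eulerianT2_eq_sum_stirlingFirst (k i : ℕ) (hk : 1 ≤ k)
    (hi1 : k + 1 ≤ i) (hi2 : i ≤ 2 * k) :
    eulerianT 2 k (2 * (k : ℤ) - i) =
      ∑ n ∈ Finset.range (i + 1),
        (-1 : ℤ) ^ (i - n) * (stirlingFirst n ((n : ℤ) - k) : ℤ) *
          ((2 * k + 1).choose (i - n) : ℤ) := by
  exact main_ind k i hi1
end
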